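/- If d : ℝ → ℝ is an odd function (d(−x) = −d(x) for all x) and g : ℝ → ℝ is an even function (g(−x) = g(x) for all x), then for every n ≥ 0 and every x ∈ ℝ, the generalized Fibonacci polynomial of Fibonacci type satisfies 𝓕ₙ(−x) = (−1)^{n+1} · 𝓕ₙ(x). -/
import Mathlib


/-- Generalized Fibonacci polynomials of Fibonacci type:
`𝓕₀ = 0`, `𝓕₁ = 1`, `𝓕ₙ = d·𝓕ₙ₋₁ + g·𝓕ₙ₋₂`. -/
noncomputable def GFPF (d g : ℝ → ℝ) : ℕ → ℝ → ℝ
  | 0 => fun _ => 0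
  | 1 => fun _ => 1
  | n + 2 => fun x => d x * GFPF d g (n + 1) x + g x * GFPF d g n x

theorem gfpf_parity (d g : ℝ → ℝ)
    (hd : ∀ x, d (-x) = -d x) (hg : ∀ x, g (-x) = g x)
    (n : ℕ) (x : ℝ) :
    GFPF d g n (-x) = (-1 : ℝ) ^ (n + 1) * GFPF d g n x := by
  induction n using Nat.strong_induction_on with
  | _ n ih =>
    match n with
    | 0 => simp [GFPF]
    | 1 => simp [GFPF]
    | (m + 2) =>
      have h1 := ih (m + 1) (by omega)
      have h0 := ih m (by omega)
      simp only [GFPF, h1, h0, hd, hg]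
      ring
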